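/- arXiv:1908.04657 — 2 statements merged into one kernel-verified Lean document; each statement's English description precedes it below -/
import Mathlib

section
/- For any planar C² vector field u = (u₁,u₂) that is divergence-free (u₁ₓ + u₂ᵧ = 0) and has spatially constant scalar vorticity (∂ₓ(u₂ₓ − u₁ᵧ) = ∂ᵧ(u₂ₓ − u₁ᵧ) = 0), the Jacobian matrix of the advective acceleration (u·∇)u is symmetric. -/
noncomputable def pd1 (f : ℝ → ℝ → ℝ) (x y : ℝ) : ℝ := deriv (fun x' => f x' y) x
noncomputable def pd2 (f : ℝ → ℝ → ℝ) (x y : ℝ) : ℝ := deriv (fun y' => f x y') y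

section Helpers

variable {f : ℝ → ℝ → ℝ} {x y : ℝ}

private lemma hasDerivAt_line1 (y x : ℝ) : HasDerivAt (fun x' : ℝ => (x', y)) ((1:ℝ), (0:ℝ)) x :=
  (hasDerivAt_id x).prodMk (hasDerivAt_const x y)

private lemma hasDerivAt_line2 (x y : ℝ) : HasDerivAt (fun y' : ℝ => (x, y')) ((0:ℝ), (1:ℝ)) y :=
  (hasDerivAt_const y x).prodMk (hasDerivAt_id y)

private lemma hasDerivAt_f1 (hf : DifferentiableAt ℝ (fun p : ℝ × ℝ => f p.1 p.2) (x, y)) :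
    HasDerivAt (fun x' => f x' y) (fderiv ℝ (fun p : ℝ × ℝ => f p.1 p.2) (x, y) (1, 0)) x :=
  by have := hf.hasFDerivAt.comp_hasDerivAt x (hasDerivAt_line1 y x); exact this

private lemma hasDerivAt_f2 (hf : DifferentiableAt ℝ (fun p : ℝ × ℝ => f p.1 p.2) (x, y)) :
    HasDerivAt (fun y' => f x y') (fderiv ℝ (fun p : ℝ × ℝ => f p.1 p.2) (x, y) (0, 1)) y :=
  hf.hasFDerivAt.comp_hasDerivAt y (hasDerivAt_line2 x y)

private lemma pd1_eq (hf : DifferentiableAt ℝ (fun p : ℝ × ℝ => f p.1 p.2) (x, y)) :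
    pd1 f x y = fderiv ℝ (fun p : ℝ × ℝ => f p.1 p.2) (x, y) (1, 0) :=
  (hasDerivAt_f1 hf).deriv

private lemma pd2_eq (hf : DifferentiableAt ℝ (fun p : ℝ × ℝ => f p.1 p.2) (x, y)) :
    pd2 f x y = fderiv ℝ (fun p : ℝ × ℝ => f p.1 p.2) (x, y) (0, 1) :=
  (hasDerivAt_f2 hf).deriv

private lemma hasDerivAt_fderiv_apply_1
    (hf : ContDiff ℝ 2 (fun p : ℝ × ℝ => f p.1 p.2)) (v : ℝ × ℝ) :
    HasDerivAt (fun x' => fderiv ℝ (fun p : ℝ × ℝ => f p.1 p.2) (x', y) v)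
      (fderiv ℝ (fderiv ℝ (fun p : ℝ × ℝ => f p.1 p.2)) (x, y) (1, 0) v) x := by
  have hD : Differentiable ℝ (fderiv ℝ (fun p : ℝ × ℝ => f p.1 p.2)) :=
    (hf.fderiv_right (m := 1) (le_refl 2)).differentiable one_ne_zero
  have h1 : HasDerivAt (fun x' => fderiv ℝ (fun p : ℝ × ℝ => f p.1 p.2) (x', y))
      (fderiv ℝ (fderiv ℝ (fun p : ℝ × ℝ => f p.1 p.2)) (x, y) (1, 0)) x :=
    (hD (x, y)).hasFDerivAt.comp_hasDerivAt x (hasDerivAt_line1 y x)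
  exact (ContinuousLinearMap.apply ℝ ℝ v).hasFDerivAt.comp_hasDerivAt x h1

private lemma hasDerivAt_fderiv_apply_2
    (hf : ContDiff ℝ 2 (fun p : ℝ × ℝ => f p.1 p.2)) (v : ℝ × ℝ) :
    HasDerivAt (fun y' => fderiv ℝ (fun p : ℝ × ℝ => f p.1 p.2) (x, y') v)
      (fderiv ℝ (fderiv ℝ (fun p : ℝ × ℝ => f p.1 p.2)) (x, y) (0, 1) v) y := by
  have hD : Differentiable ℝ (fderiv ℝ (fun p : ℝ × ℝ => f p.1 p.2)) :=
    (hf.fderiv_right (m := 1) (le_refl 2)).differentiable one_ne_zero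
  have h1 : HasDerivAt (fun y' => fderiv ℝ (fun p : ℝ × ℝ => f p.1 p.2) (x, y'))
      (fderiv ℝ (fderiv ℝ (fun p : ℝ × ℝ => f p.1 p.2)) (x, y) (0, 1)) y :=
    (hD (x, y)).hasFDerivAt.comp_hasDerivAt y (hasDerivAt_line2 x y)
  exact (ContinuousLinearMap.apply ℝ ℝ v).hasFDerivAt.comp_hasDerivAt y h1

private lemma hasDerivAt_pd1_1 (hf : ContDiff ℝ 2 (fun p : ℝ × ℝ => f p.1 p.2)) :
    HasDerivAt (fun x' => pd1 f x' y)
      (fderiv ℝ (fderiv ℝ (fun p : ℝ × ℝ => f p.1 p.2)) (x, y) (1, 0) (1, 0)) x := by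
  have he : (fun x' => pd1 f x' y)
      = fun x' => fderiv ℝ (fun p : ℝ × ℝ => f p.1 p.2) (x', y) (1, 0) :=
    funext fun x' => pd1_eq (hf.differentiable (by norm_num) (x', y))
  rw [he]; exact hasDerivAt_fderiv_apply_1 hf _

private lemma hasDerivAt_pd2_1 (hf : ContDiff ℝ 2 (fun p : ℝ × ℝ => f p.1 p.2)) :
    HasDerivAt (fun x' => pd2 f x' y)
      (fderiv ℝ (fderiv ℝ (fun p : ℝ × ℝ => f p.1 p.2)) (x, y) (1, 0) (0, 1)) x := by
  have he : (fun x' => pd2 f x' y)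
      = fun x' => fderiv ℝ (fun p : ℝ × ℝ => f p.1 p.2) (x', y) (0, 1) :=
    funext fun x' => pd2_eq (hf.differentiable (by norm_num) (x', y))
  rw [he]; exact hasDerivAt_fderiv_apply_1 hf _

private lemma hasDerivAt_pd1_2 (hf : ContDiff ℝ 2 (fun p : ℝ × ℝ => f p.1 p.2)) :
    HasDerivAt (fun y' => pd1 f x y')
      (fderiv ℝ (fderiv ℝ (fun p : ℝ × ℝ => f p.1 p.2)) (x, y) (0, 1) (1, 0)) y := by
  have he : (fun y' => pd1 f x y')
      = fun y' => fderiv ℝ (fun p : ℝ × ℝ => f p.1 p.2) (x, y') (1, 0) :=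
    funext fun y' => pd1_eq (hf.differentiable (by norm_num) (x, y'))
  rw [he]; exact hasDerivAt_fderiv_apply_2 hf _

private lemma hasDerivAt_pd2_2 (hf : ContDiff ℝ 2 (fun p : ℝ × ℝ => f p.1 p.2)) :
    HasDerivAt (fun y' => pd2 f x y')
      (fderiv ℝ (fderiv ℝ (fun p : ℝ × ℝ => f p.1 p.2)) (x, y) (0, 1) (0, 1)) y := by
  have he : (fun y' => pd2 f x y')
      = fun y' => fderiv ℝ (fun p : ℝ × ℝ => f p.1 p.2) (x, y') (0, 1) :=
    funext fun y' => pd2_eq (hf.differentiable (by norm_num) (x, y'))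
  rw [he]; exact hasDerivAt_fderiv_apply_2 hf _

private lemma snd_symm (hf : ContDiff ℝ 2 (fun p : ℝ × ℝ => f p.1 p.2)) (v w : ℝ × ℝ) :
    fderiv ℝ (fderiv ℝ (fun p : ℝ × ℝ => f p.1 p.2)) (x, y) v w
      = fderiv ℝ (fderiv ℝ (fun p : ℝ × ℝ => f p.1 p.2)) (x, y) w v := by
  have hD : Differentiable ℝ (fderiv ℝ (fun p : ℝ × ℝ => f p.1 p.2)) :=
    (hf.fderiv_right (m := 1) (le_refl 2)).differentiable one_ne_zero
  exact second_derivative_symmetric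
    (fun p => (hf.differentiable (by norm_num) p).hasFDerivAt)
    ((hD (x, y)).hasFDerivAt) v w

end Helpers

/-- for a planar C² vector field `u = (u₁,u₂)` that is divergence-free
and has spatially constant scalar vorticity, the Jacobian matrix of the advective
acceleration `(u·∇)u` is symmetric (its off-diagonal entries are equal). -/
theorem advective_acceleration_jacobian_symmetric
    (u₁ u₂ : ℝ → ℝ → ℝ)
    (hu₁ : ContDiff ℝ 2 (fun p : ℝ × ℝ => u₁ p.1 p.2))
    (hu₂ : ContDiff ℝ 2 (fun p : ℝ × ℝ => u₂ p.1 p.2))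
    (hdiv : ∀ x y, pd1 u₁ x y + pd2 u₂ x y = 0)
    (hvortx : ∀ x y, pd1 (fun a b => pd1 u₂ a b - pd2 u₁ a b) x y = 0)
    (hvorty : ∀ x y, pd2 (fun a b => pd1 u₂ a b - pd2 u₁ a b) x y = 0)
    (x y : ℝ) :
    pd2 (fun a b => u₁ a b * pd1 u₁ a b + u₂ a b * pd2 u₁ a b) x y =
    pd1 (fun a b => u₁ a b * pd1 u₂ a b + u₂ a b * pd2 u₂ a b) x y := by
  have hd₁ : Differentiable ℝ (fun p : ℝ × ℝ => u₁ p.1 p.2) := hu₁.differentiable (by norm_num)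
  have hd₂ : Differentiable ℝ (fun p : ℝ × ℝ => u₂ p.1 p.2) := hu₂.differentiable (by norm_num)
  -- second derivatives notation
  set D₁ := fderiv ℝ (fderiv ℝ (fun p : ℝ × ℝ => u₁ p.1 p.2)) (x, y) with hD₁
  set D₂ := fderiv ℝ (fderiv ℝ (fun p : ℝ × ℝ => u₂ p.1 p.2)) (x, y) with hD₂
  -- derivative of LHS inner function
  have hL : HasDerivAt (fun y' => u₁ x y' * pd1 u₁ x y' + u₂ x y' * pd2 u₁ x y')
      (pd2 u₁ x y * pd1 u₁ x y + u₁ x y * (D₁ (0,1) (1,0))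
        + (pd2 u₂ x y * pd2 u₁ x y + u₂ x y * (D₁ (0,1) (0,1)))) y := by
    have h1 := (hasDerivAt_f2 (hd₁ (x, y))).mul (hasDerivAt_pd1_2 hu₁ (x := x) (y := y))
    have h2 := (hasDerivAt_f2 (hd₂ (x, y))).mul (hasDerivAt_pd2_2 hu₁ (x := x) (y := y))
    have := h1.add h2
    rw [← pd2_eq (hd₁ (x, y)), ← pd2_eq (hd₂ (x, y))] at this
    exact this
  have hR : HasDerivAt (fun x' => u₁ x' y * pd1 u₂ x' y + u₂ x' y * pd2 u₂ x' y)
      (pd1 u₁ x y * pd1 u₂ x y + u₁ x y * (D₂ (1,0) (1,0))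
        + (pd1 u₂ x y * pd2 u₂ x y + u₂ x y * (D₂ (1,0) (0,1)))) x := by
    have h1 := (hasDerivAt_f1 (hd₁ (x, y))).mul (hasDerivAt_pd1_1 hu₂ (x := x) (y := y))
    have h2 := (hasDerivAt_f1 (hd₂ (x, y))).mul (hasDerivAt_pd2_1 hu₂ (x := x) (y := y))
    have := h1.add h2
    rw [← pd1_eq (hd₁ (x, y)), ← pd1_eq (hd₂ (x, y))] at this
    exact this
  have hLHS : pd2 (fun a b => u₁ a b * pd1 u₁ a b + u₂ a b * pd2 u₁ a b) x y
      = pd2 u₁ x y * pd1 u₁ x y + u₁ x y * (D₁ (0,1) (1,0))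
        + (pd2 u₂ x y * pd2 u₁ x y + u₂ x y * (D₁ (0,1) (0,1))) := hL.deriv
  have hRHS : pd1 (fun a b => u₁ a b * pd1 u₂ a b + u₂ a b * pd2 u₂ a b) x y
      = pd1 u₁ x y * pd1 u₂ x y + u₁ x y * (D₂ (1,0) (1,0))
        + (pd1 u₂ x y * pd2 u₂ x y + u₂ x y * (D₂ (1,0) (0,1))) := hR.deriv
  -- vorticity conditions
  have hvx : D₂ (1,0) (1,0) - D₁ (1,0) (0,1) = 0 := by
    have h := ((hasDerivAt_pd1_1 hu₂ (x := x) (y := y)).sub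
      (hasDerivAt_pd2_1 hu₁ (x := x) (y := y))).deriv
    rw [← h]; exact hvortx x y
  have hvy : D₂ (0,1) (1,0) - D₁ (0,1) (0,1) = 0 := by
    have h := ((hasDerivAt_pd1_2 hu₂ (x := x) (y := y)).sub
      (hasDerivAt_pd2_2 hu₁ (x := x) (y := y))).deriv
    rw [← h]; exact hvorty x y
  have hs₁ : D₁ (0,1) (1,0) = D₁ (1,0) (0,1) := snd_symm hu₁ _ _
  have hs₂ : D₂ (0,1) (1,0) = D₂ (1,0) (0,1) := snd_symm hu₂ _ _
  have hdv := hdiv x y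
  rw [hLHS, hRHS]
  linear_combination u₁ x y * hs₁ - u₁ x y * hvx + u₂ x y * hs₂ - u₂ x y * hvy
    + (pd2 u₁ x y - pd1 u₂ x y) * hdv
end

section
/- If |ω − C| > 2, then every solution of the autonomous linear system ẏ = By with B having rows (0, 1 + (C−ω)/2) and (1 − (C−ω)/2, 0) is bounded for all time (indeed periodic); consequently every solution x(t) = M(t)y(t) of the nonautonomous system ẋ = A(t)x (with A(t) as in the rotating-frame decomposition) remains bounded for all time. -/
private lemma abs_key {a b : ℝ} (hab : a * b < 0) : |b| * a + |a| * b = 0 := by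
  rcases lt_trichotomy a 0 with h'|h'|h'
  · have hb : 0 < b := by nlinarith
    rw [abs_of_pos hb, abs_of_neg h']; ring
  · simp [h'] at hab
  · have hb : b < 0 := by nlinarith
    rw [abs_of_neg hb, abs_of_pos h']; ring

private lemma zero_sol {a b : ℝ} (hab : a * b < 0) {w0 w1 : ℝ → ℝ}
    (h0 : ∀ t, HasDerivAt w0 (a * w1 t) t) (h1 : ∀ t, HasDerivAt w1 (b * w0 t) t)
    (i0 : w0 0 = 0) (i1 : w1 0 = 0) : ∀ t, w0 t = 0 ∧ w1 t = 0 := by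
  have ha : a ≠ 0 := by rintro rfl; simp at hab
  have hb : b ≠ 0 := by rintro rfl; simp at hab
  set E : ℝ → ℝ := fun t => |b| * (w0 t * w0 t) + |a| * (w1 t * w1 t) with hE
  have hder : ∀ t, HasDerivAt E 0 t := by
    intro t
    have := (((h0 t).mul (h0 t)).const_mul |b|).add (((h1 t).mul (h1 t)).const_mul |a|)
    refine this.congr_deriv (Eq.symm ?_)
    linear_combination (-(2:ℝ) * w0 t * w1 t) * abs_key hab
  have hconst : ∀ t, E t = E 0 := fun t =>
    is_const_of_deriv_eq_zero (fun s => (hder s).differentiableAt) (fun s => (hder s).deriv) t 0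
  intro t
  have h0' : |b| * (w0 t * w0 t) + |a| * (w1 t * w1 t) = 0 := by
    have := hconst t; simp only [hE, i0, i1, mul_zero, add_zero, zero_mul] at this
    simpa using this
  have hpa : 0 < |a| := abs_pos.mpr ha
  have hpb : 0 < |b| := abs_pos.mpr hb
  have q1 := mul_nonneg hpa.le (mul_self_nonneg (w1 t))
  have q0 := mul_nonneg hpb.le (mul_self_nonneg (w0 t))
  have e0 : |b| * (w0 t * w0 t) = 0 := le_antisymm (by linarith) (by linarith)
  have e1 : |a| * (w1 t * w1 t) = 0 := le_antisymm (by linarith) (by linarith)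
  exact ⟨mul_self_eq_zero.mp ((mul_eq_zero.mp e0).resolve_left hpb.ne'),
         mul_self_eq_zero.mp ((mul_eq_zero.mp e1).resolve_left hpa.ne')⟩

private lemma explicit_sol (a b κ : ℝ) (hκ : 0 < κ) (hab : a * b = -(κ^2))
    {y0 y1 : ℝ → ℝ}
    (h0 : ∀ t, HasDerivAt y0 (a * y1 t) t) (h1 : ∀ t, HasDerivAt y1 (b * y0 t) t) :
    ∀ t, y0 t = Real.cos (κ*t) * y0 0 + Real.sin (κ*t)/κ * (a * y1 0)
       ∧ y1 t = Real.cos (κ*t) * y1 0 + Real.sin (κ*t)/κ * (b * y0 0) := by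
  have hab' : a * b < 0 := by nlinarith
  have hκ' : κ ≠ 0 := hκ.ne'
  have hm : ∀ t : ℝ, HasDerivAt (fun s => κ * s) κ t := fun t => by
    simpa using (hasDerivAt_id t).const_mul κ
  have hcos : ∀ t : ℝ, HasDerivAt (fun s => Real.cos (κ*s)) (-Real.sin (κ*t) * κ) t :=
    fun t => (hm t).cos
  have hsin : ∀ t : ℝ, HasDerivAt (fun s => Real.sin (κ*s)) (Real.cos (κ*t) * κ) t :=
    fun t => (hm t).sin
  set g0 : ℝ → ℝ := fun t => Real.cos (κ*t) * y0 0 + Real.sin (κ*t)/κ * (a * y1 0) with hg0def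
  set g1 : ℝ → ℝ := fun t => Real.cos (κ*t) * y1 0 + Real.sin (κ*t)/κ * (b * y0 0) with hg1def
  have hg0 : ∀ t, HasDerivAt g0 (a * g1 t) t := by
    intro t
    have hD := ((hcos t).mul_const (y0 0)).add (((hsin t).div_const κ).mul_const (a * y1 0))
    refine hD.congr_deriv (Eq.symm ?_)
    simp only [hg1def]
    field_simp
    linear_combination (Real.sin (κ*t) * y0 0) * hab
  have hg1 : ∀ t, HasDerivAt g1 (b * g0 t) t := by
    intro t
    have hD := ((hcos t).mul_const (y1 0)).add (((hsin t).div_const κ).mul_const (b * y0 0))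
    refine hD.congr_deriv (Eq.symm ?_)
    simp only [hg0def]
    field_simp
    linear_combination (Real.sin (κ*t) * y1 0) * hab
  have hw := zero_sol hab' (w0 := fun t => y0 t - g0 t) (w1 := fun t => y1 t - g1 t)
    (fun t => by have := (h0 t).sub (hg0 t); refine this.congr_deriv (Eq.symm ?_); ring)
    (fun t => by have := (h1 t).sub (hg1 t); refine this.congr_deriv (Eq.symm ?_); ring)
    (by simp [hg0def]) (by simp [hg1def])
  intro t
  obtain ⟨e0, e1⟩ := hw t
  constructor
  · have : y0 t - g0 t = 0 := e0
    simp only [hg0def] at this; linarith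
  · have : y1 t - g1 t = 0 := e1
    simp only [hg1def] at this; linarith

open Matrix

noncomputable def Bmat (C ω : ℝ) : Matrix (Fin 2) (Fin 2) ℝ :=
  !![0, 1 + (C - ω) / 2; 1 - (C - ω) / 2, 0]

noncomputable def Amat (C ω t : ℝ) : Matrix (Fin 2) (Fin 2) ℝ :=
  !![-Real.sin (C * t), Real.cos (C * t) - ω / 2;
     Real.cos (C * t) + ω / 2, Real.sin (C * t)]

/-- if `|ω − C| > 2`, every solution of `ẏ = By` is bounded for all
time (indeed periodic), and consequently every solution of the nonautonomous
system `ẋ = A(t)x` remains bounded for all time. -/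
theorem center_case_bounded_solutions (C ω : ℝ) (h : |ω - C| > 2) :
    (∀ y : ℝ → (Fin 2 → ℝ),
      (∀ t, HasDerivAt y ((Bmat C ω).mulVec (y t)) t) →
      (∃ R : ℝ, ∀ t, ‖y t‖ ≤ R) ∧ (∃ T > 0, ∀ t, y (t + T) = y t)) ∧
    (∀ x : ℝ → (Fin 2 → ℝ),
      (∀ t, HasDerivAt x ((Amat C ω t).mulVec (x t)) t) →
      ∃ R : ℝ, ∀ t, ‖x t‖ ≤ R) := by
  have habs : 2 < |C - ω| := by rwa [abs_sub_comm] at h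
  have hd2 : 1 < ((C - ω)/2)^2 := by nlinarith [sq_abs (C - ω), abs_nonneg (C - ω)]
  set d : ℝ := (C - ω)/2 with hddef
  set κ : ℝ := Real.sqrt (d^2 - 1) with hκdef
  have hκpos : 0 < κ := Real.sqrt_pos.mpr (by linarith)
  have hκsq : κ^2 = d^2 - 1 := Real.sq_sqrt (by linarith)
  have hab : (1 + d) * (1 - d) = -(κ^2) := by rw [hκsq]; ring
  have key : ∀ y : ℝ → (Fin 2 → ℝ),
      (∀ t, HasDerivAt y ((Bmat C ω).mulVec (y t)) t) →
      (∃ R : ℝ, ∀ t, ‖y t‖ ≤ R) ∧ (∃ T > 0, ∀ t, y (t + T) = y t) := by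
    intro y hy
    have hy0 : ∀ t, HasDerivAt (fun s => y s 0) ((1 + d) * y t 1) t := by
      intro t
      have := hasDerivAt_pi.mp (hy t) 0
      simpa [Bmat, Matrix.mulVec, dotProduct, Fin.sum_univ_two, Matrix.vecHead, Matrix.vecTail, hddef] using this
    have hy1 : ∀ t, HasDerivAt (fun s => y s 1) ((1 - d) * y t 0) t := by
      intro t
      have := hasDerivAt_pi.mp (hy t) 1
      simpa [Bmat, Matrix.mulVec, dotProduct, Fin.sum_univ_two, Matrix.vecHead, Matrix.vecTail, hddef] using this
    have hexp := explicit_sol (1 + d) (1 - d) κ hκpos hab hy0 hy1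
    have bnd : ∀ u v s : ℝ, |Real.cos s * u + Real.sin s / κ * v| ≤ |u| + |v|/κ := by
      intro u v s
      calc |Real.cos s * u + Real.sin s / κ * v| ≤ |Real.cos s * u| + |Real.sin s / κ * v| :=
            abs_add_le _ _
        _ ≤ |u| + |v|/κ := by
            rw [abs_mul, abs_mul, abs_div, abs_of_pos hκpos, div_mul_eq_mul_div]
            have h3 : |Real.cos s| * |u| ≤ |u| :=
              mul_le_of_le_one_left (abs_nonneg u) (Real.abs_cos_le_one s)
            have h4 : |Real.sin s| * |v| ≤ |v| :=
              mul_le_of_le_one_left (abs_nonneg v) (Real.abs_sin_le_one s)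
            have h5 : |Real.sin s| * |v| / κ ≤ |v| / κ := by
              exact div_le_div_of_nonneg_right h4 hκpos.le
            linarith
    constructor
    · refine ⟨(|y 0 0| + |(1 + d) * y 0 1|/κ) + (|y 0 1| + |(1 - d) * y 0 0|/κ), ?_⟩
      intro t
      have hR0 : (0:ℝ) ≤ (|y 0 0| + |(1 + d) * y 0 1|/κ) + (|y 0 1| + |(1 - d) * y 0 0|/κ) := by
        positivity
      rw [pi_norm_le_iff_of_nonneg hR0, Fin.forall_fin_two]
      constructor
      · rw [Real.norm_eq_abs, (hexp t).1]
        have := bnd (y 0 0) ((1 + d) * y 0 1) (κ * t)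
        have hnn : (0:ℝ) ≤ |y 0 1| + |(1 - d) * y 0 0|/κ := by positivity
        linarith
      · rw [Real.norm_eq_abs, (hexp t).2]
        have := bnd (y 0 1) ((1 - d) * y 0 0) (κ * t)
        have hnn : (0:ℝ) ≤ |y 0 0| + |(1 + d) * y 0 1|/κ := by positivity
        linarith
    · refine ⟨2 * Real.pi / κ, by positivity, ?_⟩
      intro t
      have harg : κ * (t + 2 * Real.pi / κ) = κ * t + 2 * Real.pi := by
        field_simp
      have e0 : y (t + 2 * Real.pi / κ) 0 = y t 0 := by
        rw [(hexp (t + 2 * Real.pi / κ)).1, (hexp t).1, harg, Real.cos_add_two_pi,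
          Real.sin_add_two_pi]
      have e1 : y (t + 2 * Real.pi / κ) 1 = y t 1 := by
        rw [(hexp (t + 2 * Real.pi / κ)).2, (hexp t).2, harg, Real.cos_add_two_pi,
          Real.sin_add_two_pi]
      funext i
      fin_cases i
      · exact e0
      · exact e1
  refine ⟨key, ?_⟩
  intro x hx
  have hx0 : ∀ t, HasDerivAt (fun s => x s 0)
      (-Real.sin (C*t) * x t 0 + (Real.cos (C*t) - ω/2) * x t 1) t := by
    intro t
    have := hasDerivAt_pi.mp (hx t) 0
    simpa [Amat, Matrix.mulVec, dotProduct, Fin.sum_univ_two, Matrix.vecHead, Matrix.vecTail] using this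
  have hx1 : ∀ t, HasDerivAt (fun s => x s 1)
      ((Real.cos (C*t) + ω/2) * x t 0 + Real.sin (C*t) * x t 1) t := by
    intro t
    have := hasDerivAt_pi.mp (hx t) 1
    simpa [Amat, Matrix.mulVec, dotProduct, Fin.sum_univ_two, Matrix.vecHead, Matrix.vecTail] using this
  have hm : ∀ t : ℝ, HasDerivAt (fun s => C * s / 2) (C / 2) t := by
    intro t
    simpa using ((hasDerivAt_id t).const_mul C).div_const 2
  have hc : ∀ t : ℝ, HasDerivAt (fun s => Real.cos (C*s/2)) (-Real.sin (C*t/2) * (C/2)) t :=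
    fun t => (hm t).cos
  have hs : ∀ t : ℝ, HasDerivAt (fun s => Real.sin (C*s/2)) (Real.cos (C*t/2) * (C/2)) t :=
    fun t => (hm t).sin
  set y : ℝ → Fin 2 → ℝ := fun t =>
    ![Real.cos (C*t/2) * x t 0 + Real.sin (C*t/2) * x t 1,
      -Real.sin (C*t/2) * x t 0 + Real.cos (C*t/2) * x t 1] with hydef
  have hy : ∀ t, HasDerivAt y ((Bmat C ω).mulVec (y t)) t := by
    intro t
    have hcos2 : Real.cos (C*t) = 2 * Real.cos (C*t/2)^2 - 1 := by
      have := Real.cos_two_mul (C*t/2)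
      rwa [show 2*(C*t/2) = C*t by ring] at this
    have hsin2 : Real.sin (C*t) = 2 * Real.sin (C*t/2) * Real.cos (C*t/2) := by
      have := Real.sin_two_mul (C*t/2)
      rwa [show 2*(C*t/2) = C*t by ring] at this
    have hpyth := Real.sin_sq_add_cos_sq (C*t/2)
    rw [hasDerivAt_pi, Fin.forall_fin_two]
    constructor
    · have hD := ((hc t).mul (hx0 t)).add ((hs t).mul (hx1 t))
      have hfun : (fun s => y s 0) = fun s => Real.cos (C*s/2) * x s 0 + Real.sin (C*s/2) * x s 1 := by
        funext s; simp [hydef]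
      rw [hfun]
      refine hD.congr_deriv (Eq.symm ?_)
      simp [hydef, Bmat, Matrix.mulVec, dotProduct, Fin.sum_univ_two, Matrix.vecHead, Matrix.vecTail]
      rw [hcos2, hsin2]
      linear_combination (-2 * Real.cos (C*t/2) * x t 1) * hpyth
    · have hD := ((hs t).neg.mul (hx0 t)).add ((hc t).mul (hx1 t))
      have hfun : (fun s => y s 1) = fun s => -Real.sin (C*s/2) * x s 0 + Real.cos (C*s/2) * x s 1 := by
        funext s; simp [hydef]
      rw [hfun]
      refine hD.congr_deriv (Eq.symm ?_)
      simp [hydef, Bmat, Matrix.mulVec, dotProduct, Fin.sum_univ_two, Matrix.vecHead, Matrix.vecTail]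
      rw [hcos2, hsin2]
      linear_combination (-2 * Real.cos (C*t/2) * x t 0) * hpyth
  obtain ⟨⟨R, hR⟩, -⟩ := key y hy
  have hR0 : 0 ≤ R := le_trans (norm_nonneg _) (hR 0)
  refine ⟨2 * R, ?_⟩
  intro t
  have hpyth := Real.sin_sq_add_cos_sq (C*t/2)
  have hy0 : y t 0 = Real.cos (C*t/2) * x t 0 + Real.sin (C*t/2) * x t 1 := by simp [hydef]
  have hy1 : y t 1 = -Real.sin (C*t/2) * x t 0 + Real.cos (C*t/2) * x t 1 := by simp [hydef]
  have hxy0 : x t 0 = Real.cos (C*t/2) * y t 0 + (-Real.sin (C*t/2)) * y t 1 := by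
    rw [hy0, hy1]; linear_combination (-(x t 0)) * hpyth
  have hxy1 : x t 1 = Real.sin (C*t/2) * y t 0 + Real.cos (C*t/2) * y t 1 := by
    rw [hy0, hy1]; linear_combination (-(x t 1)) * hpyth
  have n0 : |y t 0| ≤ R := by
    have := norm_le_pi_norm (y t) 0
    rw [Real.norm_eq_abs] at this
    exact le_trans this (hR t)
  have n1 : |y t 1| ≤ R := by
    have := norm_le_pi_norm (y t) 1
    rw [Real.norm_eq_abs] at this
    exact le_trans this (hR t)
  have habs2 : ∀ p q u v : ℝ, |p| ≤ 1 → |q| ≤ 1 → |u| ≤ R → |v| ≤ R → |p*u + q*v| ≤ 2*R := by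
    intro p q u v hp hq hu hv
    calc |p*u + q*v| ≤ |p*u| + |q*v| := abs_add_le _ _
      _ ≤ 2*R := by
        rw [abs_mul, abs_mul]
        have e1 : |p| * |u| ≤ |u| := mul_le_of_le_one_left (abs_nonneg u) hp
        have e2 : |q| * |v| ≤ |v| := mul_le_of_le_one_left (abs_nonneg v) hq
        linarith
  rw [pi_norm_le_iff_of_nonneg (by linarith), Fin.forall_fin_two]
  constructor
  · rw [Real.norm_eq_abs, hxy0]
    exact habs2 _ _ _ _ (Real.abs_cos_le_one _) (by rw [abs_neg]; exact Real.abs_sin_le_one _) n0 n1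
  · rw [Real.norm_eq_abs, hxy1]
    exact habs2 _ _ _ _ (Real.abs_sin_le_one _) (Real.abs_cos_le_one _) n0 n1
end
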